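/- With the sawtooth construction as above and a_{n,k} := sup_{x' ∈ Q(n,k)} f_{n−1}(x'), for every n ∈ ℕ₀, k ∈ {0,…,2^{nm}−1}^{d-1}, and every x' ∈ Q(n,k), one has f(x') − a_{n,k} ≤ 2^{−γmn}. -/

import Mathlib

/-- The tent function `ψ(x') = (1/2 − ‖x' − (1/2,…,1/2)‖_∞)·1_{(0,1)^{n}}(x')`
(the norm on `Fin n → ℝ` is the sup norm). -/
noncomputable def sawPsi (n : ℕ) (x : Fin n → ℝ) : ℝ :=
  Set.indicator {y : Fin n → ℝ | ∀ i, 0 < y i ∧ y i < 1}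
    (fun y => 1 / 2 - ‖y - fun _ => (1 / 2 : ℝ)‖) x

/-- `g_j(x') = Σ_{k ∈ {0,…,2^{jm}−1}^{n}} ψ(2^{jm}·x' − k)`. -/
noncomputable def sawG (n m j : ℕ) (x : Fin n → ℝ) : ℝ :=
  ∑ k : Fin n → Fin (2 ^ (j * m)),
    sawPsi n (fun i => 2 ^ (j * m) * x i - (k i : ℝ))

/-- Partial sum `f_{N−1}(x') = Σ_{j=0}^{N−1} 2^{−γjm}·g_j(x')` (so `sawF n m γ 0 = f_{−1} ≡ 0`). -/
noncomputable def sawFpartial (n m : ℕ) (γ : ℝ) (N : ℕ) (x : Fin n → ℝ) : ℝ :=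
  ∑ j ∈ Finset.range N, (2 : ℝ) ^ (-(γ * ((j : ℝ) * m))) * sawG n m j x

/-- The sawtooth boundary function `f(x') = Σ_{j=0}^∞ 2^{−γjm}·g_j(x')`. -/
noncomputable def sawF (n m : ℕ) (γ : ℝ) (x : Fin n → ℝ) : ℝ :=
  ∑' j : ℕ, (2 : ℝ) ^ (-(γ * ((j : ℝ) * m))) * sawG n m j x

/-- The dyadic subcube `Q(n,k) = {x' : 2^{nm}·x' − k ∈ (0,1)^{d-1}}`. -/
def sawQ (dd m n : ℕ) (k : Fin dd → Fin (2 ^ (n * m))) : Set (Fin dd → ℝ) :=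
  {x | ∀ i, (k i : ℝ) < 2 ^ (n * m) * x i ∧ 2 ^ (n * m) * x i < (k i : ℝ) + 1}

/-- `a_{n,k} = sup_{x' ∈ Q(n,k)} f_{n−1}(x')`. -/
noncomputable def sawA (dd m : ℕ) (γ : ℝ) (n : ℕ) (k : Fin dd → Fin (2 ^ (n * m))) : ℝ :=
  sSup (sawFpartial dd m γ n '' sawQ dd m n k)


lemma sawPsi_nonneg (d : ℕ) (x : Fin d → ℝ) : 0 ≤ sawPsi d x := by
  apply Set.indicator_nonneg
  intro y hy
  have h : ‖y - fun _ => (1/2 : ℝ)‖ ≤ 1/2 := by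
    rw [pi_norm_le_iff_of_nonneg (by norm_num)]
    intro i
    have := hy i
    simp only [Pi.sub_apply, Real.norm_eq_abs]
    rw [abs_le]
    constructor <;> linarith [this.1, this.2]
  linarith

lemma sawPsi_le_half (d : ℕ) (x : Fin d → ℝ) : sawPsi d x ≤ 1/2 := by
  unfold sawPsi
  by_cases h : x ∈ {y : Fin d → ℝ | ∀ i, 0 < y i ∧ y i < 1}
  · rw [Set.indicator_of_mem h]
    have := norm_nonneg (x - fun _ => (1/2 : ℝ))
    linarith
  · rw [Set.indicator_of_notMem h]; norm_num

lemma sawPsi_mem_of_ne_zero {d : ℕ} {x : Fin d → ℝ} (h : sawPsi d x ≠ 0) :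
    ∀ i, 0 < x i ∧ x i < 1 := by
  by_contra hc
  exact h (Set.indicator_of_notMem (by simpa using hc) _)

lemma sawG_nonneg (d m j : ℕ) (x : Fin d → ℝ) : 0 ≤ sawG d m j x :=
  Finset.sum_nonneg fun k _ => sawPsi_nonneg _ _

lemma sawG_le_half (d m j : ℕ) (x : Fin d → ℝ) : sawG d m j x ≤ 1/2 := by
  classical
  unfold sawG
  by_cases h : ∃ k : Fin d → Fin (2 ^ (j * m)),
      sawPsi d (fun i => 2 ^ (j * m) * x i - (k i : ℝ)) ≠ 0
  · obtain ⟨k₀, hk₀⟩ := h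
    have huniq : ∀ k : Fin d → Fin (2 ^ (j * m)),
        sawPsi d (fun i => 2 ^ (j * m) * x i - (k i : ℝ)) ≠ 0 → k = k₀ := by
      intro k hk
      funext i
      have h1 := sawPsi_mem_of_ne_zero hk i
      have h2 := sawPsi_mem_of_ne_zero hk₀ i
      have hlt1 : ((k i : ℕ) : ℝ) < ((k₀ i : ℕ) : ℝ) + 1 := by
        linarith [h1.2, h2.1]
      have hlt2 : ((k₀ i : ℕ) : ℝ) < ((k i : ℕ) : ℝ) + 1 := by
        linarith [h1.1, h2.2]
      have n1 : (k i : ℕ) < (k₀ i : ℕ) + 1 := by exact_mod_cast hlt1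
      have n2 : (k₀ i : ℕ) < (k i : ℕ) + 1 := by exact_mod_cast hlt2
      exact Fin.ext (by omega)
    rw [Finset.sum_eq_single_of_mem k₀ (Finset.mem_univ _)
      (fun b _ hb => by by_contra hc; exact hb (huniq b hc))]
    exact sawPsi_le_half _ _
  · push_neg at h
    rw [Finset.sum_congr rfl fun k _ => h k]
    simp

lemma saw_term_eq (m : ℕ) (γ : ℝ) (j : ℕ) :
    (2 : ℝ) ^ (-(γ * ((j : ℝ) * m))) = ((2 : ℝ) ^ (-(γ * m))) ^ j := by
  rw [← Real.rpow_natCast ((2:ℝ) ^ (-(γ * (m:ℝ)))) j, ← Real.rpow_mul (by norm_num)]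
  ring_nf

/-- Lemma 7.2(iv): on each dyadic subcube `Q(n,k)`, one has
`f(x') − a_{n,k} ≤ 2^{−γmn}`. -/
theorem sawF_sub_a_upper (d m : ℕ) (γ : ℝ) (hd : 2 ≤ d)
    (hγ1 : ((d : ℝ) - 1) / d < γ) (hγ2 : γ < 1)
    (hm1 : 1 ≤ (m : ℝ) * γ) (hm2 : 4 ≤ (m : ℝ) * (1 - γ))
    (n : ℕ) (k : Fin (d - 1) → Fin (2 ^ (n * m)))
    (x : Fin (d - 1) → ℝ) (hx : x ∈ sawQ (d - 1) m n k) :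
    sawF (d - 1) m γ x - sawA (d - 1) m γ n k ≤
      (2 : ℝ) ^ (-(γ * ((m : ℝ) * n))) := by
  set r : ℝ := (2 : ℝ) ^ (-(γ * (m : ℝ))) with hr
  have hr0 : 0 < r := Real.rpow_pos_of_pos (by norm_num) _
  have hrhalf : r ≤ 1/2 := by
    have : r ≤ (2:ℝ) ^ (-1 : ℝ) :=
      Real.rpow_le_rpow_of_exponent_le (by norm_num) (by linarith [hm1])
    calc r ≤ (2:ℝ) ^ (-1 : ℝ) := this
    _ = 1/2 := by rw [Real.rpow_neg_one]; norm_num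
  have hr1 : r < 1 := by linarith
  -- the series terms
  set f : ℕ → ℝ := fun j => (2 : ℝ) ^ (-(γ * ((j : ℝ) * m))) * sawG (d-1) m j x with hf
  have hfle : ∀ j, f j ≤ (1/2) * r ^ j := by
    intro j
    rw [hf]
    simp only
    rw [saw_term_eq]
    have h1 : (0:ℝ) ≤ r ^ j := pow_nonneg hr0.le _
    calc ((2:ℝ) ^ (-(γ * (m:ℝ)))) ^ j * sawG (d-1) m j x
        ≤ r ^ j * (1/2) := by
          apply mul_le_mul_of_nonneg_left (sawG_le_half _ _ _ _) h1
      _ = (1/2) * r ^ j := by ring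
  have hfnn : ∀ j, 0 ≤ f j := fun j =>
    mul_nonneg (Real.rpow_nonneg (by norm_num) _) (sawG_nonneg _ _ _ _)
  have hsumgeo : Summable (fun j : ℕ => (1/2 : ℝ) * r ^ j) :=
    (summable_geometric_of_lt_one hr0.le hr1).mul_left _
  have hsum : Summable f := Summable.of_nonneg_of_le hfnn hfle hsumgeo
  -- split
  have hsplit : ∑ j ∈ Finset.range n, f j + ∑' j, f (j + n) = ∑' j, f j :=
    Summable.sum_add_tsum_nat_add n hsum
  have hFpart : sawFpartial (d-1) m γ n x = ∑ j ∈ Finset.range n, f j := rfl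
  have hFeq : sawF (d-1) m γ x = ∑' j, f j := rfl
  -- f_{n-1}(x) ≤ a
  have hbdd : BddAbove (sawFpartial (d-1) m γ n '' sawQ (d-1) m n k) := by
    refine ⟨∑ j ∈ Finset.range n, (2 : ℝ) ^ (-(γ * ((j : ℝ) * m))) * (1/2), ?_⟩
    rintro z ⟨y, _, rfl⟩
    apply Finset.sum_le_sum
    intro j _
    exact mul_le_mul_of_nonneg_left (sawG_le_half _ _ _ _)
      (Real.rpow_nonneg (by norm_num) _)
  have hle_a : sawFpartial (d-1) m γ n x ≤ sawA (d-1) m γ n k :=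
    le_csSup hbdd ⟨x, hx, rfl⟩
  -- tail bound
  have htail : ∑' j, f (j + n) ≤ (2 : ℝ) ^ (-(γ * ((m:ℝ) * n))) := by
    have hsum2 : Summable (fun j : ℕ => (1/2 : ℝ) * r ^ (j + n)) := by
      simpa using ((summable_geometric_of_lt_one hr0.le hr1).mul_left
        ((1/2) * r ^ n)).congr (fun j => by ring)
    have h1 : ∑' j, f (j + n) ≤ ∑' j : ℕ, (1/2 : ℝ) * r ^ (j + n) :=
      Summable.tsum_le_tsum (fun j => hfle (j + n)) (hsum.comp_injective (add_left_injective n)) hsum2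
    have h2 : ∑' j : ℕ, (1/2 : ℝ) * r ^ (j + n) = (1/2) * r ^ n * (1 - r)⁻¹ := by
      calc ∑' j : ℕ, (1/2 : ℝ) * r ^ (j + n)
          = ∑' j : ℕ, ((1/2 : ℝ) * r ^ n) * r ^ j := by
            congr 1; funext j; ring
        _ = ((1/2) * r ^ n) * ∑' j : ℕ, r ^ j := tsum_mul_left
        _ = (1/2) * r ^ n * (1 - r)⁻¹ := by
            rw [tsum_geometric_of_lt_one hr0.le hr1]
    have h3 : (1/2 : ℝ) * r ^ n * (1 - r)⁻¹ ≤ r ^ n := by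
      have hpos : (0:ℝ) < 1 - r := by linarith
      have hinv : (1 - r)⁻¹ ≤ 2 := by
        rw [inv_le_comm₀ hpos (by norm_num)]
        linarith
      have := mul_le_mul_of_nonneg_left hinv
        (mul_nonneg (by norm_num : (0:ℝ) ≤ 1/2) (pow_nonneg hr0.le n))
      calc (1/2 : ℝ) * r ^ n * (1 - r)⁻¹ ≤ (1/2) * r ^ n * 2 := this
        _ = r ^ n := by ring
    have h4 : r ^ n = (2 : ℝ) ^ (-(γ * ((m:ℝ) * n))) := by
      rw [hr, ← Real.rpow_natCast ((2:ℝ) ^ (-(γ * (m:ℝ)))) n,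
        ← Real.rpow_mul (by norm_num)]
      ring_nf
    linarith
  have := hsplit
  rw [hFeq, ← hsplit, hFpart] at *
  linarith
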